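/- Let α > 0. For all real u_-, u_+, the denominator u_+^2 + u_+*u_- + u_-^2 + α is strictly positive, and the two-point flux f^num(u_-, u_+) = (1/2) * (u_+^5 + u_+^4*u_- + u_+^3*u_-^2 + u_+^2*u_-^3 + u_+*u_-^4 + u_-^5 + (α/2)*(u_+^3 + u_+^2*u_- + u_+*u_-^2 + u_-^3)) / (u_+^2 + u_+*u_- + u_-^2 + α) satisfies the entropy-conservation condition (u_+^3 + α*u_+ - u_-^3 - α*u_-) * f^num(u_-, u_+) = (1/2)*(u_+^6 - u_-^6) + (α/4)*(u_+^4 - u_-^4). -/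

import Mathlib

/-- Entropy-conservative flux for the cubic conservation law with the strictly
convex `L² ∩ L⁴` entropy `U(u) = u^4/4 + (α/2)*u^2`, `α > 0`. -/
theorem stmt_5 (α : ℝ) (hα : 0 < α) (um up : ℝ) :
    0 < up ^ 2 + up * um + um ^ 2 + α ∧
    (up ^ 3 + α * up - um ^ 3 - α * um) *
      ((1 / 2 : ℝ) *
        (up ^ 5 + up ^ 4 * um + up ^ 3 * um ^ 2 + up ^ 2 * um ^ 3
          + up * um ^ 4 + um ^ 5
          + (α / 2) * (up ^ 3 + up ^ 2 * um + up * um ^ 2 + um ^ 3))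
        / (up ^ 2 + up * um + um ^ 2 + α))
      = (1 / 2 : ℝ) * (up ^ 6 - um ^ 6) + (α / 4) * (up ^ 4 - um ^ 4) := by
  have hpos : 0 < up ^ 2 + up * um + um ^ 2 + α := by nlinarith [sq_nonneg (up + um), sq_nonneg (up - um)]
  refine ⟨hpos, ?_⟩
  rw [mul_div_assoc', div_eq_iff hpos.ne']
  ring
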